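/- Let 0 ≤ μ < 2π, s ∈ ℝ, α = 1 − μ/(2π). Define V(φ) = exp( (μφ/(2π))·M(e₀) ) ∈ SO⁺(2,1) and X(t,r,φ) = ( t + sφ/(2π), (r/α)cos(αφ), (r/α)sin(αφ) ) ∈ ℝ³. Then for all t ∈ ℝ, r > 0, φ ∈ ℝ: V(φ)⁻¹·(∂X/∂t) = (1, 0, 0); V(φ)⁻¹·(∂X/∂r) = (0, cos φ/α, sin φ/α); V(φ)⁻¹·(∂X/∂φ) = (s/(2π), −r sin φ, r cos φ); and V(φ)⁻¹·(dV/dφ) = (μ/(2π))·M(e₀). (The trivialising function Γ_p⁻¹ = (V, X) of the spinning-cone gauge field reproduces exactly the dreibein one-forms e⁰ = dt + (s/2π)dφ, e¹ = (cos φ/α)dr − r sin φ dφ, e² = (sin φ/α)dr + r cos φ dφ and spin connection ω⁰ = (μ/2π)dφ, ω¹ = ω² = 0 of the spinning cone, via e^aP_a = Ad(V⁻¹)dX and ω = V⁻¹dV.) -/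

import Mathlib

open Matrix

noncomputable section

attribute [local instance] Matrix.normedAddCommGroup Matrix.normedSpace

/-- The Minkowski metric matrix diag(1,-1,-1). -/
def η3 : Matrix (Fin 3) (Fin 3) ℝ := Matrix.diagonal ![1, -1, -1]

/-- The Minkowski bilinear form on ℝ³. -/
def mink (x y : Fin 3 → ℝ) : ℝ := x 0 * y 0 - x 1 * y 1 - x 2 * y 2

/-- The Minkowski cross product. -/
def crossM (p q : Fin 3 → ℝ) : Fin 3 → ℝ :=
  ![p 1 * q 2 - p 2 * q 1, p 0 * q 2 - p 2 * q 0, p 1 * q 0 - p 0 * q 1]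

/-- The map M : ℝ³ → so(2,1), M(p)q = p ×_η q. -/
def Mmap (p : Fin 3 → ℝ) : Matrix (Fin 3) (Fin 3) ℝ :=
  !![0, -(p 2), p 1; -(p 2), 0, p 0; p 1, -(p 0), 0]

/-- The inverse m : so(2,1) → ℝ³ of M (extracted entrywise). -/
def mser (X : Matrix (Fin 3) (Fin 3) ℝ) : Fin 3 → ℝ := ![X 1 2, X 0 2, -(X 0 1)]

/-- Membership in SO⁺(2,1). -/
def IsSOplus (v : Matrix (Fin 3) (Fin 3) ℝ) : Prop :=
  vᵀ * η3 * v = η3 ∧ v.det = 1 ∧ 0 < v 0 0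

/-- so(2,1) as a set of 3×3 matrices. -/
def IsSO21 (X : Matrix (Fin 3) (Fin 3) ℝ) : Prop := Xᵀ * η3 + η3 * X = 0

/-- The 4×4 Poincaré matrix [[v,x],[0,1]]. -/
def pmat (v : Matrix (Fin 3) (Fin 3) ℝ) (x : Fin 3 → ℝ) : Matrix (Fin 4) (Fin 4) ℝ :=
  Matrix.of fun i j =>
    if hi : (i : ℕ) < 3 then
      if hj : (j : ℕ) < 3 then v ⟨i, hi⟩ ⟨j, hj⟩ else x ⟨i, hi⟩
    else if (j : ℕ) < 3 then 0 else 1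

/-- The 4×4 iso(2,1) matrix [[X,b],[0,0]]. -/
def amat (X : Matrix (Fin 3) (Fin 3) ℝ) (b : Fin 3 → ℝ) : Matrix (Fin 4) (Fin 4) ℝ :=
  Matrix.of fun i j =>
    if hi : (i : ℕ) < 3 then
      if hj : (j : ℕ) < 3 then X ⟨i, hi⟩ ⟨j, hj⟩ else b ⟨i, hi⟩
    else 0

/-- Membership in the Poincaré group ISO⁺(2,1) ⊂ GL₄(ℝ). -/
def IsISO (g : Matrix (Fin 4) (Fin 4) ℝ) : Prop :=
  ∃ v x, IsSOplus v ∧ g = pmat v x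

/-- Membership in the Lie algebra iso(2,1). -/
def IsISOAlg (ξ : Matrix (Fin 4) (Fin 4) ℝ) : Prop :=
  ∃ X b, IsSO21 X ∧ ξ = amat X b

/-- Standard basis vectors of ℝ³. -/
def e3 (a : Fin 3) : Fin 3 → ℝ := Pi.single a 1

/-- The rotation/boost generators Ĵ_a of iso(2,1). -/
def Jhat (a : Fin 3) : Matrix (Fin 4) (Fin 4) ℝ := amat (Mmap (e3 a)) 0

/-- The translation generators P̂_a of iso(2,1). -/
def Phat (a : Fin 3) : Matrix (Fin 4) (Fin 4) ℝ := amat 0 (e3 a)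

/-- The invariant pairing ⟨[[X,b],0],[[Y,c],0]⟩ = η(m X, c) + η(m Y, b) on iso(2,1). -/
def pairIso (ξ ζ : Matrix (Fin 4) (Fin 4) ℝ) : ℝ :=
  mink ![ξ 1 2, ξ 0 2, -(ξ 0 1)] ![ζ 0 3, ζ 1 3, ζ 2 3]
  + mink ![ζ 1 2, ζ 0 2, -(ζ 0 1)] ![ξ 0 3, ξ 1 3, ξ 2 3]

/-- Ordered product U_k(ε) = u_{k-1}(ε)⋯u_0(ε) (with U_0 = 1). -/
def ordProd {n : ℕ} (u : ℕ → ℝ → Matrix (Fin n) (Fin n) ℝ) : ℕ → ℝ → Matrix (Fin n) (Fin n) ℝ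
  | 0 => fun _ => 1
  | k + 1 => fun ε => u k ε * ordProd u k ε

namespace Stmt8Aux

def A3 : Matrix (Fin 3) (Fin 3) ℝ := !![0,0,0;0,0,1;0,-1,0]
def C3 : Matrix (Fin 3) (Fin 3) ℝ := !![0,0,0;0,1,0;0,0,1]
def E3 : Matrix (Fin 3) (Fin 3) ℝ := !![1,0,0;0,0,0;0,0,0]

def Rot (θ : ℝ) : Matrix (Fin 3) (Fin 3) ℝ :=
  !![1, 0, 0; 0, Real.cos θ, Real.sin θ; 0, -Real.sin θ, Real.cos θ]

lemma Mmap_e0 : Mmap (e3 0) = A3 := by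
  ext i j
  fin_cases i <;> fin_cases j <;> simp [Mmap, e3, A3, Pi.single_apply, Matrix.vecHead, Matrix.vecTail]

lemma Rot_zero : Rot 0 = 1 := by
  ext i j
  fin_cases i <;> fin_cases j <;> simp [Rot, Matrix.one_apply, Matrix.vecHead, Matrix.vecTail]

lemma Rot_mul_Rot (θ ψ : ℝ) : Rot θ * Rot ψ = Rot (θ + ψ) := by
  ext i j
  fin_cases i <;> fin_cases j <;>
    simp [Rot, Matrix.mul_apply, Fin.sum_univ_three, Matrix.vecHead, Matrix.vecTail, Real.cos_add, Real.sin_add] <;> ring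

lemma Rot_neg_mul (θ : ℝ) : Rot (-θ) * Rot θ = 1 := by
  rw [Rot_mul_Rot, neg_add_cancel, Rot_zero]

lemma Rot_inv (θ : ℝ) : (Rot θ)⁻¹ = Rot (-θ) := Matrix.inv_eq_left_inv (Rot_neg_mul θ)

lemma Rot_eq (θ : ℝ) : Rot θ = E3 + Real.cos θ • C3 + Real.sin θ • A3 := by
  ext i j
  fin_cases i <;> fin_cases j <;> simp [Rot, E3, C3, A3, Matrix.vecHead, Matrix.vecTail]

lemma A3_mul_Rot (θ : ℝ) : A3 * Rot θ = Real.cos θ • A3 + (-Real.sin θ) • C3 := by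
  ext i j
  fin_cases i <;> fin_cases j <;>
    simp [Rot, A3, C3, Matrix.mul_apply, Fin.sum_univ_three, Matrix.vecHead, Matrix.vecTail]

lemma A3_comm_Rot (θ : ℝ) : A3 * Rot θ = Rot θ * A3 := by
  ext i j
  fin_cases i <;> fin_cases j <;>
    simp [Rot, A3, Matrix.mul_apply, Fin.sum_univ_three, Matrix.vecHead, Matrix.vecTail]

lemma hasDerivAt_Rot (θ : ℝ) : HasDerivAt Rot (A3 * Rot θ) θ := by
  rw [A3_mul_Rot, funext Rot_eq]
  have h := ((hasDerivAt_const θ E3).add ((Real.hasDerivAt_cos θ).smul_const C3)).add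
    ((Real.hasDerivAt_sin θ).smul_const A3)
  exact h.congr_deriv (by rw [zero_add, add_comm])

section LinftyExp

attribute [-instance] Matrix.normedAddCommGroup Matrix.normedSpace
attribute [local instance] Matrix.linftyOpNormedAddCommGroup Matrix.linftyOpNormedRing
  Matrix.linftyOpNormedAlgebra
set_option synthInstance.maxHeartbeats 400000

lemma hasDerivAt_Rot_linfty (θ : ℝ) : HasDerivAt Rot (A3 * Rot θ) θ := by
  rw [A3_mul_Rot, funext Rot_eq]
  have h := ((hasDerivAt_const θ E3).add ((Real.hasDerivAt_cos θ).smul_const C3)).add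
    ((Real.hasDerivAt_sin θ).smul_const A3)
  exact h.congr_deriv (by rw [zero_add, add_comm])

lemma exp_eq_Rot (θ : ℝ) : NormedSpace.exp (θ • A3) = Rot θ := by
  have hd : ∀ u : ℝ, HasDerivAt
      (fun v : ℝ => NormedSpace.exp (v • A3) * Rot (-v)) 0 u := by
    intro u
    have h1 := hasDerivAt_exp_smul_const (𝕂 := ℝ) A3 u
    have h2 : HasDerivAt (fun v : ℝ => Rot (-v)) (-(A3 * Rot (-u))) u := by
      have h5 := (hasDerivAt_Rot_linfty (-u)).scomp u (hasDerivAt_neg u)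
      simp only [Function.comp_def, neg_smul, one_smul] at h5
      exact h5
    have h3 := h1.mul h2
    have h4 : NormedSpace.exp (u • A3) * A3 * Rot (-u)
        + NormedSpace.exp (u • A3) * -(A3 * Rot (-u)) = 0 := by
      rw [mul_neg, mul_assoc, add_neg_cancel]
    exact h3.congr_deriv h4
  have h10 : NormedSpace.exp (θ • A3) * Rot (-θ)
      = NormedSpace.exp ((0:ℝ) • A3) * Rot (-0) :=
    is_const_of_deriv_eq_zero (fun u => (hd u).differentiableAt) (fun u => (hd u).deriv) θ 0
  have h11 : NormedSpace.exp (θ • A3) * Rot (-θ) = 1 := by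
    rw [h10, zero_smul, NormedSpace.exp_zero, neg_zero, Rot_zero, one_mul]
  calc NormedSpace.exp (θ • A3)
      = NormedSpace.exp (θ • A3) * (Rot (-θ) * Rot θ) := by rw [Rot_neg_mul, mul_one]
    _ = Rot θ := by rw [← mul_assoc, h11, one_mul]

end LinftyExp

end Stmt8Aux

open Stmt8Aux in
/-- the trivialising function Γ_p⁻¹ = (V, X) of the spinning-cone gauge field
reproduces the dreibein and spin connection of the spinning cone, via e^aP_a = Ad(V⁻¹)dX
and ω = V⁻¹dV. -/
theorem statement8 (μ s : ℝ) (hμ0 : 0 ≤ μ) (hμ : μ < 2 * Real.pi)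
    (α : ℝ) (hα : α = 1 - μ / (2 * Real.pi))
    (V : ℝ → Matrix (Fin 3) (Fin 3) ℝ)
    (hV : ∀ φ, V φ = NormedSpace.exp ((μ * φ / (2 * Real.pi)) • Mmap (e3 0)))
    (X : ℝ → ℝ → ℝ → (Fin 3 → ℝ))
    (hX : ∀ t r φ, X t r φ = ![t + s * φ / (2 * Real.pi),
      (r / α) * Real.cos (α * φ), (r / α) * Real.sin (α * φ)])
    (t r φ : ℝ) (hr : 0 < r) :
    (V φ)⁻¹ *ᵥ deriv (fun t' => X t' r φ) t = ![1, 0, 0]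
    ∧ (V φ)⁻¹ *ᵥ deriv (fun r' => X t r' φ) r = ![0, Real.cos φ / α, Real.sin φ / α]
    ∧ (V φ)⁻¹ *ᵥ deriv (fun φ' => X t r φ') φ
        = ![s / (2 * Real.pi), -(r * Real.sin φ), r * Real.cos φ]
    ∧ (V φ)⁻¹ * deriv V φ = (μ / (2 * Real.pi)) • Mmap (e3 0) := by
  have h2π : (0:ℝ) < 2 * Real.pi := by positivity
  have hαpos : 0 < α := by
    rw [hα]; have : μ / (2 * Real.pi) < 1 := (div_lt_one h2π).mpr hμ; linarith
  have hαne : α ≠ 0 := ne_of_gt hαpos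
  have hVφ : V φ = Rot (μ * φ / (2 * Real.pi)) := by rw [hV, Mmap_e0, exp_eq_Rot]
  have hVinv : (V φ)⁻¹ = Rot (-(μ * φ / (2 * Real.pi))) := by rw [hVφ, Rot_inv]
  have hsum : α * φ + μ * φ / (2 * Real.pi) = φ := by
    rw [hα]; field_simp; ring
  refine ⟨?_, ?_, ?_, ?_⟩
  · have hd1 : HasDerivAt (fun t' => X t' r φ) ![1, 0, 0] t := by
      have hXf : (fun t' => X t' r φ) = fun t' => ![t' + s * φ / (2 * Real.pi),
          (r / α) * Real.cos (α * φ), (r / α) * Real.sin (α * φ)] :=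
        funext fun t' => hX t' r φ
      rw [hXf]
      refine hasDerivAt_pi.mpr fun i => ?_
      fin_cases i
      · simpa using (hasDerivAt_id t).add_const (s * φ / (2 * Real.pi))
      · simpa using hasDerivAt_const t ((r / α) * Real.cos (α * φ))
      · simpa using hasDerivAt_const t ((r / α) * Real.sin (α * φ))
    rw [hd1.deriv, hVinv]
    funext i
    fin_cases i <;>
      simp [Rot, Matrix.mulVec, dotProduct, Fin.sum_univ_three,
        Matrix.vecHead, Matrix.vecTail]
  · have hd2 : HasDerivAt (fun r' => X t r' φ)
        ![0, Real.cos (α * φ) / α, Real.sin (α * φ) / α] r := by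
      have hXf : (fun r' => X t r' φ) = fun r' => ![t + s * φ / (2 * Real.pi),
          (r' / α) * Real.cos (α * φ), (r' / α) * Real.sin (α * φ)] :=
        funext fun r' => hX t r' φ
      rw [hXf]
      refine hasDerivAt_pi.mpr fun i => ?_
      fin_cases i
      · simpa using hasDerivAt_const r (t + s * φ / (2 * Real.pi))
      · have h : HasDerivAt (fun x : ℝ => x / α * Real.cos (α * φ))
            (Real.cos (α * φ) / α) r := by
          have h0 := ((hasDerivAt_id r).div_const α).mul_const (Real.cos (α * φ))
          exact h0.congr_deriv (by ring)
        simpa using h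
      · have h : HasDerivAt (fun x : ℝ => x / α * Real.sin (α * φ))
            (Real.sin (α * φ) / α) r := by
          have h0 := ((hasDerivAt_id r).div_const α).mul_const (Real.sin (α * φ))
          exact h0.congr_deriv (by ring)
        simpa using h
    rw [hd2.deriv, hVinv]
    funext i
    fin_cases i
    · simp [Rot, Matrix.mulVec, dotProduct, Fin.sum_univ_three,
        Matrix.vecHead, Matrix.vecTail]
    · have hcos : Real.cos φ = Real.cos (α * φ + μ * φ / (2 * Real.pi)) := by rw [hsum]
      simp [Rot, Matrix.mulVec, dotProduct, Fin.sum_univ_three,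
        Matrix.vecHead, Matrix.vecTail]
      rw [hcos, Real.cos_add]
      ring
    · have hsin : Real.sin φ = Real.sin (α * φ + μ * φ / (2 * Real.pi)) := by rw [hsum]
      simp [Rot, Matrix.mulVec, dotProduct, Fin.sum_univ_three,
        Matrix.vecHead, Matrix.vecTail]
      rw [hsin, Real.sin_add]
      ring
  · have hd3 : HasDerivAt (fun φ' => X t r φ')
        ![s / (2 * Real.pi), -(r * Real.sin (α * φ)), r * Real.cos (α * φ)] φ := by
      have hXf : (fun φ' => X t r φ') = fun φ' => ![t + s * φ' / (2 * Real.pi),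
          (r / α) * Real.cos (α * φ'), (r / α) * Real.sin (α * φ')] :=
        funext fun φ' => hX t r φ'
      rw [hXf]
      refine hasDerivAt_pi.mpr fun i => ?_
      fin_cases i
      · have h : HasDerivAt (fun x : ℝ => t + s * x / (2 * Real.pi))
            (s / (2 * Real.pi)) φ := by
          have h0 := (((hasDerivAt_id φ).const_mul s).div_const (2 * Real.pi)).const_add t
          exact h0.congr_deriv (by ring)
        simpa using h
      · have h1 : HasDerivAt (fun x : ℝ => Real.cos (α * x)) (-Real.sin (α * φ) * α) φ := by
          have h0 := (Real.hasDerivAt_cos (α * φ)).comp φ ((hasDerivAt_id φ).const_mul α)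
          simpa [Function.comp_def] using h0
        have h : HasDerivAt (fun x : ℝ => (r / α) * Real.cos (α * x))
            (-(r * Real.sin (α * φ))) φ := by
          have h2 := h1.const_mul (r / α)
          exact h2.congr_deriv (by field_simp)
        simpa using h
      · have h1 : HasDerivAt (fun x : ℝ => Real.sin (α * x)) (Real.cos (α * φ) * α) φ := by
          have h0 := (Real.hasDerivAt_sin (α * φ)).comp φ ((hasDerivAt_id φ).const_mul α)
          simpa [Function.comp_def] using h0
        have h : HasDerivAt (fun x : ℝ => (r / α) * Real.sin (α * x))
            (r * Real.cos (α * φ)) φ := by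
          have h2 := h1.const_mul (r / α)
          exact h2.congr_deriv (by field_simp)
        simpa using h
    rw [hd3.deriv, hVinv]
    funext i
    fin_cases i
    · simp [Rot, Matrix.mulVec, dotProduct, Fin.sum_univ_three,
        Matrix.vecHead, Matrix.vecTail]
    · have hsin : Real.sin φ = Real.sin (α * φ + μ * φ / (2 * Real.pi)) := by rw [hsum]
      simp [Rot, Matrix.mulVec, dotProduct, Fin.sum_univ_three,
        Matrix.vecHead, Matrix.vecTail]
      rw [hsin, Real.sin_add]
      ring
    · have hcos : Real.cos φ = Real.cos (α * φ + μ * φ / (2 * Real.pi)) := by rw [hsum]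
      simp [Rot, Matrix.mulVec, dotProduct, Fin.sum_univ_three,
        Matrix.vecHead, Matrix.vecTail]
      rw [hcos, Real.cos_add]
      ring
  · have hVfun : V = fun ψ => Rot (μ * ψ / (2 * Real.pi)) :=
      funext fun ψ => by rw [hV, Mmap_e0, exp_eq_Rot]
    have hin : HasDerivAt (fun ψ : ℝ => μ * ψ / (2 * Real.pi)) (μ / (2 * Real.pi)) φ := by
      simpa using ((hasDerivAt_id φ).const_mul μ).div_const (2 * Real.pi)
    have hdV : HasDerivAt V
        ((μ / (2 * Real.pi)) • (A3 * Rot (μ * φ / (2 * Real.pi)))) φ := by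
      rw [hVfun]
      have h5 := (hasDerivAt_Rot (μ * φ / (2 * Real.pi))).scomp φ hin
      exact h5
    rw [show deriv V φ = (μ / (2 * Real.pi)) • (A3 * Rot (μ * φ / (2 * Real.pi))) from hdV.deriv, hVinv, Mmap_e0, mul_smul_comm, A3_comm_Rot, ← mul_assoc,
      Rot_neg_mul, one_mul]
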